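/- Let f : ℝ → ℝ be four times continuously differentiable in a neighborhood of t. Then, as h → 0⁺, (11/27) f(t − 3h) + (16/27) f(t) + h ( (4/9) f'(t − 3h) + (16/9) f'(t) ) − f(t + h) = O(h⁴). -/

import Mathlib

open Filter Asymptotics Topology Set

/-- One integration step for big-O estimates: if `R 0 = 0` and `R` has derivative `R'`
near `0` with `R' = O(s^n)`, then `R = O(s^(n+1))`. -/
private lemma bigO_step {R R' : ℝ → ℝ} {n : ℕ} (h0 : R 0 = 0)
    (hR : ∀ᶠ s in 𝓝 (0:ℝ), HasDerivAt R (R' s) s)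
    (hR' : R' =O[𝓝 (0:ℝ)] fun s => s ^ n) :
    R =O[𝓝 (0:ℝ)] fun s => s ^ (n + 1) := by
  obtain ⟨C, hC⟩ := hR'.bound
  have hC' : ∀ᶠ s in 𝓝 (0:ℝ), ‖R' s‖ ≤ |C| * ‖s ^ n‖ :=
    hC.mono fun s h => h.trans (mul_le_mul_of_nonneg_right (le_abs_self C) (norm_nonneg _))
  obtain ⟨ε, εpos, hε⟩ := Metric.eventually_nhds_iff.1 (hR.and hC')
  rw [isBigO_iff]
  refine ⟨|C|, Metric.eventually_nhds_iff.2 ⟨ε, εpos, fun s hs => ?_⟩⟩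
  have hs' : |s| < ε := by simpa [Real.dist_eq] using hs
  have habs : ∀ y ∈ uIcc (0:ℝ) s, |y| ≤ |s| := by
    intro y hy
    rcases mem_uIcc.1 hy with ⟨h1, h2⟩ | ⟨h1, h2⟩
    · rw [abs_of_nonneg h1]; exact h2.trans (le_abs_self s)
    · rw [abs_of_nonpos h2]; exact (neg_le_neg h1).trans (neg_le_abs s)
  have key := (convex_uIcc (0:ℝ) s).norm_image_sub_le_of_norm_hasDerivWithin_le
      (f := R) (f' := R') (C := |C| * |s| ^ n)
      (fun y hy => ((hε (by simpa [Real.dist_eq] using (habs y hy).trans_lt hs')).1).hasDerivWithinAt)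
      (fun y hy => by
        have hb := (hε (show dist y 0 < ε by
          simpa [Real.dist_eq] using (habs y hy).trans_lt hs')).2
        refine hb.trans ?_
        have h2 : ‖y ^ n‖ ≤ |s| ^ n := by
          rw [Real.norm_eq_abs, abs_pow]
          exact pow_le_pow_left₀ (abs_nonneg y) (habs y hy) n
        exact mul_le_mul_of_nonneg_left h2 (abs_nonneg C))
      left_mem_uIcc right_mem_uIcc
  rw [h0, sub_zero, sub_zero] at key
  calc ‖R s‖ ≤ |C| * |s| ^ n * ‖s‖ := key
    _ = |C| * ‖s ^ (n + 1)‖ := by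
        rw [Real.norm_eq_abs, Real.norm_eq_abs, abs_pow, pow_succ]
        ring

private lemma hasDerivAt_cubic (a b c d x : ℝ) :
    HasDerivAt (fun s : ℝ => a + s * b + s ^ 2 / 2 * c + s ^ 3 / 6 * d)
      (b + x * c + x ^ 2 / 2 * d) x := by
  have h1 : HasDerivAt (fun s : ℝ => s ^ 2) (2 * x ^ 1) x := by simpa using hasDerivAt_pow 2 x
  have h2 : HasDerivAt (fun s : ℝ => s ^ 3) (3 * x ^ 2) x := by simpa using hasDerivAt_pow 3 x
  have h0 : HasDerivAt (fun s : ℝ => s) 1 x := hasDerivAt_id x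
  have := ((((h0.mul_const b).const_add a).add ((h1.div_const 2).mul_const c)).add
      ((h2.div_const 6).mul_const d))
  exact this.congr_deriv (by ring)

private lemma hasDerivAt_quad (a b c x : ℝ) :
    HasDerivAt (fun s : ℝ => a + s * b + s ^ 2 / 2 * c) (b + x * c) x := by
  have h1 : HasDerivAt (fun s : ℝ => s ^ 2) (2 * x ^ 1) x := by simpa using hasDerivAt_pow 2 x
  have h0 : HasDerivAt (fun s : ℝ => s) 1 x := hasDerivAt_id x
  have := (((h0.mul_const b).const_add a).add ((h1.div_const 2).mul_const c))
  exact this.congr_deriv (by ring)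

private lemma hasDerivAt_lin (a b x : ℝ) :
    HasDerivAt (fun s : ℝ => a + s * b) b x := by
  have h0 : HasDerivAt (fun s : ℝ => s) 1 x := hasDerivAt_id x
  have := ((h0.mul_const b).const_add a)
  exact this.congr_deriv (by ring)

/-- Local consistency (third-order accuracy) of the explicit SSP multistep method
`u^{n+1} = (11/27) u^{n−3} + (16/27) u^n + Δt ((4/9) L(u^{n−3}) + (16/9) L(u^n))`:
for `f` four times continuously differentiable near `t`, as `h → 0⁺`,
`(11/27) f(t−3h) + (16/27) f(t) + h ((4/9) f'(t−3h) + (16/9) f'(t)) − f(t+h) = O(h⁴)`. -/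
theorem ssp_ms3_consistency
    (f : ℝ → ℝ) (t : ℝ) (hf : ContDiffAt ℝ 4 f t) :
    (fun h : ℝ =>
        (11/27) * f (t - 3*h) + (16/27) * f t
          + h * ((4/9) * deriv f (t - 3*h) + (16/9) * deriv f t) - f (t + h))
      =O[𝓝[>] (0:ℝ)] fun h : ℝ => h ^ 4 := by
  obtain ⟨u, hu_mem, hu⟩ := hf.contDiffOn le_rfl (by simp)
  obtain ⟨v, hvsub, hvo, htv⟩ := mem_nhds_iff.1 hu_mem
  have hfv : ContDiffOn ℝ 4 f v := hu.mono hvsub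
  set d1 := deriv f with hd1
  set d2 := deriv d1 with hd2
  set d3 := deriv d2 with hd3
  set d4 := deriv d3 with hd4
  have h1v : ContDiffOn ℝ 3 d1 v := hfv.deriv_of_isOpen hvo (by norm_num)
  have h2v : ContDiffOn ℝ 2 d2 v := h1v.deriv_of_isOpen hvo (by norm_num)
  have h3v : ContDiffOn ℝ 1 d3 v := h2v.deriv_of_isOpen hvo (by norm_num)
  have h4v : ContDiffOn ℝ 0 d4 v := h3v.deriv_of_isOpen hvo (by norm_num)
  -- pointwise derivatives on `v`
  have hdf : ∀ x ∈ v, HasDerivAt f (d1 x) x := fun x hx =>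
    ((hfv.differentiableOn (by norm_num)).differentiableAt (hvo.mem_nhds hx)).hasDerivAt
  have hdf1 : ∀ x ∈ v, HasDerivAt d1 (d2 x) x := fun x hx =>
    ((h1v.differentiableOn (by norm_num)).differentiableAt (hvo.mem_nhds hx)).hasDerivAt
  have hdf2 : ∀ x ∈ v, HasDerivAt d2 (d3 x) x := fun x hx =>
    ((h2v.differentiableOn (by norm_num)).differentiableAt (hvo.mem_nhds hx)).hasDerivAt
  have hdf3 : ∀ x ∈ v, HasDerivAt d3 (d4 x) x := fun x hx =>
    ((h3v.differentiableOn (by norm_num)).differentiableAt (hvo.mem_nhds hx)).hasDerivAt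
  -- eventually near `0`, `t + s ∈ v`
  have hmem : ∀ᶠ s in 𝓝 (0:ℝ), t + s ∈ v := by
    have hc : ContinuousAt (fun s : ℝ => t + s) 0 := by fun_prop
    have := hc.preimage_mem_nhds (by simpa using hvo.mem_nhds htv)
    exact this
  -- shifted derivative facts
  have hshift : ∀ (g g' : ℝ → ℝ), (∀ x ∈ v, HasDerivAt g (g' x) x) →
      ∀ s : ℝ, t + s ∈ v → HasDerivAt (fun s : ℝ => g (t + s)) (g' (t + s)) s := by
    intro g g' hg s hs
    have := (hg (t + s) hs).comp s ((hasDerivAt_id s).const_add t)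
    exact this.congr_deriv (mul_one _)
  -- remainder of `d3`
  have hP0 : (fun s : ℝ => d3 (t + s) - d3 t) =O[𝓝 (0:ℝ)] fun s => s ^ 1 := by
    have hbase : (fun s : ℝ => d4 (t + s)) =O[𝓝 (0:ℝ)] fun s : ℝ => s ^ 0 := by
      have hcont : ContinuousAt d4 t :=
        (h4v.continuousOn).continuousAt (hvo.mem_nhds htv)
      have htend : Tendsto (fun s : ℝ => d4 (t + s)) (𝓝 0) (𝓝 (d4 t)) := by
        have h' : Tendsto (fun s : ℝ => t + s) (𝓝 0) (𝓝 t) :=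
          ((continuous_const.add continuous_id).tendsto' 0 t (by norm_num))
        exact Filter.Tendsto.comp hcont h'
      simpa using htend.isBigO_one ℝ
    exact bigO_step (by simp)
      (hmem.mono fun s hs => (hshift d3 d4 hdf3 s hs).sub_const (d3 t)) hbase
  -- remainder of `d2`
  have hQ1 : (fun s : ℝ => d2 (t + s) - (d2 t + s * d3 t)) =O[𝓝 (0:ℝ)] fun s => s ^ 2 := by
    refine bigO_step (by simp) (hmem.mono fun s hs => ?_) hP0
    exact (hshift d2 d3 hdf2 s hs).sub (hasDerivAt_lin (d2 t) (d3 t) s)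
  -- remainder of `d1`
  have hS2 : (fun s : ℝ => d1 (t + s) - (d1 t + s * d2 t + s ^ 2 / 2 * d3 t))
      =O[𝓝 (0:ℝ)] fun s => s ^ 3 := by
    refine bigO_step (by simp) (hmem.mono fun s hs => ?_) hQ1
    exact (hshift d1 d2 hdf1 s hs).sub (hasDerivAt_quad (d1 t) (d2 t) (d3 t) s)
  -- remainder of `f`
  have hR3 : (fun s : ℝ => f (t + s) - (f t + s * d1 t + s ^ 2 / 2 * d2 t + s ^ 3 / 6 * d3 t))
      =O[𝓝 (0:ℝ)] fun s => s ^ 4 := by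
    refine bigO_step (by simp) (hmem.mono fun s hs => ?_) hS2
    exact (hshift f d1 hdf s hs).sub (hasDerivAt_cubic (f t) (d1 t) (d2 t) (d3 t) s)
  -- compose with `h ↦ -3h` and assemble
  have hcomp : Tendsto (fun h : ℝ => (-3) * h) (𝓝[>] 0) (𝓝 0) := by
    have h' : Tendsto (fun h : ℝ => (-3) * h) (𝓝 (0:ℝ)) (𝓝 0) :=
      ((by fun_prop : Continuous fun h : ℝ => (-3) * h).tendsto' 0 0 (by norm_num))
    exact h'.mono_left nhdsWithin_le_nhds
  have hA : (fun h : ℝ => f (t + (-3) * h)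
        - (f t + ((-3) * h) * d1 t + ((-3) * h) ^ 2 / 2 * d2 t + ((-3) * h) ^ 3 / 6 * d3 t))
      =O[𝓝[>] (0:ℝ)] fun h : ℝ => h ^ 4 := by
    refine (hR3.comp_tendsto hcomp).trans (isBigO_of_le' (c := 81) _ fun h => ?_)
    simp only [Function.comp_apply, Real.norm_eq_abs]
    rw [show ((-3:ℝ) * h) ^ 4 = 81 * h ^ 4 by ring, abs_mul]
    norm_num
  have hB : (fun h : ℝ => h * (d1 (t + (-3) * h)
        - (d1 t + ((-3) * h) * d2 t + ((-3) * h) ^ 2 / 2 * d3 t)))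
      =O[𝓝[>] (0:ℝ)] fun h : ℝ => h ^ 4 := by
    have := (isBigO_refl (fun h : ℝ => h) (𝓝[>] (0:ℝ))).mul (hS2.comp_tendsto hcomp)
    refine this.trans (isBigO_of_le' (c := 27) _ fun h => ?_)
    simp only [Function.comp_apply, Real.norm_eq_abs]
    rw [show h * ((-3:ℝ) * h) ^ 3 = -27 * h ^ 4 by ring, abs_mul]
    norm_num
  have hC : (fun h : ℝ => f (t + h)
        - (f t + h * d1 t + h ^ 2 / 2 * d2 t + h ^ 3 / 6 * d3 t))
      =O[𝓝[>] (0:ℝ)] fun h : ℝ => h ^ 4 := hR3.mono nhdsWithin_le_nhds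
  have final := ((hA.const_mul_left (11/27)).add (hB.const_mul_left (4/9))).sub hC
  refine final.congr' ?_ EventuallyEq.rfl
  refine Eventually.of_forall fun h => ?_
  have e : t - 3 * h = t + (-3) * h := by ring
  beta_reduce
  rw [e]
  ring
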